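/- Let U ⊆ ℂ be open, let ψ be holomorphic on U with nowhere vanishing derivative, and let Ψ be the lift of ψ. Then for every continuously real-differentiable function f : ℂ × ℂ → ℂ and every (z,y) ∈ U × ℂ: (X(f∘Ψ))(z,y) = (X f)(Ψ(z,y)) + δ₁(ψ)(z,y)·(Y f)(Ψ(z,y)), and (Y(f∘Ψ))(z,y) = (Y f)(Ψ(z,y)). (These twisted Leibniz rules realize the coproduct formulas ΔX = 1⊗X + X⊗1 + δ₁⊗Y and ΔY = 1⊗Y + Y⊗1.) -/

import Mathlib

/-- First-variable Wirtinger derivative ∂₁F(p) = ½(DF(p)(e₁) − i·DF(p)(i·e₁)) for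
F : ℂ × ℂ → ℂ, where DF(p) is the real Fréchet derivative of F at p. -/
noncomputable def wirt1 (F : ℂ × ℂ → ℂ) (p : ℂ × ℂ) : ℂ :=
  (1 / 2 : ℂ) * (fderiv ℝ F p (1, 0) - Complex.I * fderiv ℝ F p (Complex.I, 0))

/-- Second-variable Wirtinger derivative ∂₂F(p) = ½(DF(p)(e₂) − i·DF(p)(i·e₂)). -/
noncomputable def wirt2 (F : ℂ × ℂ → ℂ) (p : ℂ × ℂ) : ℂ :=
  (1 / 2 : ℂ) * (fderiv ℝ F p (0, 1) - Complex.I * fderiv ℝ F p (0, Complex.I))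

/-- The operator (X F)(z,y) = y·∂₁F(z,y). -/
noncomputable def Xop (F : ℂ × ℂ → ℂ) : ℂ × ℂ → ℂ := fun p => p.2 * wirt1 F p

/-- The operator (Y F)(z,y) = y·∂₂F(z,y). -/
noncomputable def Yop (F : ℂ × ℂ → ℂ) : ℂ × ℂ → ℂ := fun p => p.2 * wirt2 F p

/-- The lift of ψ to the frame bundle: Ψ(z,y) = (ψ(z), ψ'(z)·y). -/
noncomputable def liftF (ψ : ℂ → ℂ) : ℂ × ℂ → ℂ × ℂ :=
  fun p => (ψ p.1, deriv ψ p.1 * p.2)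

/-- δ₁(ψ)(z,y) = y·ψ''(z)/ψ'(z). -/
noncomputable def delta1 (ψ : ℂ → ℂ) : ℂ × ℂ → ℂ :=
  fun p => p.2 * (deriv (deriv ψ) p.1 / deriv ψ p.1)

/-- An ℝ-linear map `m : ℂ → ℂ` satisfies `m c − i·m(i·c) = c·(m 1 − i·m i)`. -/
lemma keyR (m : ℂ →L[ℝ] ℂ) (c : ℂ) :
    m c - Complex.I * m (Complex.I * c) = c * (m 1 - Complex.I * m Complex.I) := by
  have hc : (c.re : ℂ) + c.im * Complex.I = c := Complex.re_add_im c
  have h1 : m c = (c.re : ℂ) * m 1 + (c.im : ℂ) * m Complex.I := by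
    rw [← Complex.real_smul, ← Complex.real_smul, ← map_smul, ← map_smul, ← map_add]
    congr 1
    rw [Complex.real_smul, Complex.real_smul, mul_one]
    exact hc.symm
  have h2 : m (Complex.I * c) = (-c.im : ℂ) * m 1 + (c.re : ℂ) * m Complex.I := by
    rw [show (-c.im : ℂ) = ((Complex.I*c).re : ℂ) by simp,
      show (c.re : ℂ) = ((Complex.I*c).im : ℂ) by simp]
    rw [← Complex.real_smul, ← Complex.real_smul, ← map_smul, ← map_smul, ← map_add]
    congr 1
    rw [Complex.real_smul, Complex.real_smul, mul_one]
    exact (Complex.re_add_im _).symm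
  rw [h1, h2]
  linear_combination (m 1 - Complex.I * m Complex.I) * hc
    + (↑c.im * m Complex.I) * Complex.I_sq

lemma key1 (L : (ℂ × ℂ) →L[ℝ] ℂ) (c : ℂ) :
    L (c, 0) - Complex.I * L (Complex.I * c, 0)
      = c * (L (1, 0) - Complex.I * L (Complex.I, 0)) :=
  keyR (L.comp (ContinuousLinearMap.inl ℝ ℂ ℂ)) c

lemma key2 (L : (ℂ × ℂ) →L[ℝ] ℂ) (c : ℂ) :
    L (0, c) - Complex.I * L (0, Complex.I * c)
      = c * (L (0, 1) - Complex.I * L (0, Complex.I)) :=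
  keyR (L.comp (ContinuousLinearMap.inr ℝ ℂ ℂ)) c

/-- Twisted Leibniz rules realizing the coproduct formulas
ΔX = 1⊗X + X⊗1 + δ₁⊗Y and ΔY = 1⊗Y + Y⊗1: for ψ holomorphic with nowhere vanishing
derivative on the open set U, with lift Ψ, and f : ℂ × ℂ → ℂ continuously
real-differentiable, one has on U × ℂ:
X(f∘Ψ) = (X f)∘Ψ + δ₁(ψ)·((Y f)∘Ψ) and Y(f∘Ψ) = (Y f)∘Ψ. -/
theorem stmt5 (U : Set ℂ) (hU : IsOpen U) (ψ : ℂ → ℂ)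
    (hψ : DifferentiableOn ℂ ψ U) (hne : ∀ z ∈ U, deriv ψ z ≠ 0)
    (f : ℂ × ℂ → ℂ) (hf : ContDiff ℝ 1 f) :
    ∀ z ∈ U, ∀ y : ℂ,
      Xop (f ∘ liftF ψ) (z, y)
          = Xop f (liftF ψ (z, y)) + delta1 ψ (z, y) * Yop f (liftF ψ (z, y)) ∧
      Yop (f ∘ liftF ψ) (z, y) = Yop f (liftF ψ (z, y)) := by
  intro z hz y
  have hψa := hψ.analyticOnNhd hU
  have h1 : HasDerivAt ψ (deriv ψ z) z := ((hψa z hz).differentiableAt).hasDerivAt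
  have h2 : HasDerivAt (deriv ψ) (deriv (deriv ψ) z) z :=
    ((hψa.deriv z hz).differentiableAt).hasDerivAt
  -- derivative of the lift
  have hfst : HasFDerivAt (fun p : ℂ × ℂ => p.1) (ContinuousLinearMap.fst ℝ ℂ ℂ) (z, y) :=
    hasFDerivAt_fst
  have hsnd : HasFDerivAt (fun p : ℂ × ℂ => p.2) (ContinuousLinearMap.snd ℝ ℂ ℂ) (z, y) :=
    hasFDerivAt_snd
  have hA := ((h1.hasFDerivAt.restrictScalars ℝ)).comp (x := ((z : ℂ), y)) hfst
  have hB := ((h2.hasFDerivAt.restrictScalars ℝ)).comp (x := ((z : ℂ), y)) hfst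
  have hC := hB.mul' hsnd
  have hΨ := HasFDerivAt.prodMk hA hC
  set q : ℂ × ℂ := liftF ψ (z, y) with hq
  have hfq : HasFDerivAt f (fderiv ℝ f q) q :=
    (hf.differentiable one_ne_zero q).hasFDerivAt
  have hcomp := hfq.comp (z, y) hΨ
  have hD : fderiv ℝ (f ∘ liftF ψ) (z, y) = _ := hcomp.fderiv
  set Df := fderiv ℝ f q with hDf
  set a := deriv ψ z with ha'
  set b := deriv (deriv ψ) z with hb'
  have e1 : fderiv ℝ (f ∘ liftF ψ) (z, y) (1, 0) = Df (a, b * y) := by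
    rw [hD]
    simp only [ContinuousLinearMap.comp_apply, ContinuousLinearMap.prod_apply,
      ContinuousLinearMap.add_apply, ContinuousLinearMap.coe_smul', Pi.smul_apply,
      ContinuousLinearMap.coe_restrictScalars', ContinuousLinearMap.coe_fst',
      ContinuousLinearMap.coe_snd', ContinuousLinearMap.smulRight_apply,
      ContinuousLinearMap.one_apply, smul_eq_mul, Function.comp_apply,
      ContinuousLinearMap.toSpanSingleton_apply, op_smul_eq_mul]
    congr 1 <;> ring
  have e2 : fderiv ℝ (f ∘ liftF ψ) (z, y) (Complex.I, 0)
      = Df (Complex.I * a, Complex.I * (b * y)) := by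
    rw [hD]
    simp only [ContinuousLinearMap.comp_apply, ContinuousLinearMap.prod_apply,
      ContinuousLinearMap.add_apply, ContinuousLinearMap.coe_smul', Pi.smul_apply,
      ContinuousLinearMap.coe_restrictScalars', ContinuousLinearMap.coe_fst',
      ContinuousLinearMap.coe_snd', ContinuousLinearMap.smulRight_apply,
      ContinuousLinearMap.one_apply, smul_eq_mul, Function.comp_apply,
      ContinuousLinearMap.toSpanSingleton_apply, op_smul_eq_mul]
    congr 1 <;> ring
  have e3 : fderiv ℝ (f ∘ liftF ψ) (z, y) (0, 1) = Df (0, a) := by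
    rw [hD]
    simp only [ContinuousLinearMap.comp_apply, ContinuousLinearMap.prod_apply,
      ContinuousLinearMap.add_apply, ContinuousLinearMap.coe_smul', Pi.smul_apply,
      ContinuousLinearMap.coe_restrictScalars', ContinuousLinearMap.coe_fst',
      ContinuousLinearMap.coe_snd', ContinuousLinearMap.smulRight_apply,
      ContinuousLinearMap.one_apply, smul_eq_mul, Function.comp_apply,
      ContinuousLinearMap.toSpanSingleton_apply, op_smul_eq_mul]
    rw [← ha']
    congr 1 <;> ring
  have e4 : fderiv ℝ (f ∘ liftF ψ) (z, y) (0, Complex.I) = Df (0, Complex.I * a) := by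
    rw [hD]
    simp only [ContinuousLinearMap.comp_apply, ContinuousLinearMap.prod_apply,
      ContinuousLinearMap.add_apply, ContinuousLinearMap.coe_smul', Pi.smul_apply,
      ContinuousLinearMap.coe_restrictScalars', ContinuousLinearMap.coe_fst',
      ContinuousLinearMap.coe_snd', ContinuousLinearMap.smulRight_apply,
      ContinuousLinearMap.one_apply, smul_eq_mul, Function.comp_apply,
      ContinuousLinearMap.toSpanSingleton_apply, op_smul_eq_mul]
    rw [← ha']
    congr 1 <;> ring
  have split : ∀ u v : ℂ, Df (u, v) = Df (u, 0) + Df (0, v) := by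
    intro u v
    rw [← map_add]
    norm_num
  have hw1 : wirt1 (f ∘ liftF ψ) (z, y) = a * wirt1 f q + (b * y) * wirt2 f q := by
    rw [wirt1, e1, e2, split, split (Complex.I * a)]
    have k1 := key1 Df a
    have k2 := key2 Df (b * y)
    rw [wirt1, wirt2]
    linear_combination (1/2 : ℂ) * k1 + (1/2 : ℂ) * k2
  have hw2 : wirt2 (f ∘ liftF ψ) (z, y) = a * wirt2 f q := by
    rw [wirt2, e3, e4]
    have k2 := key2 Df a
    rw [wirt2]
    linear_combination (1/2 : ℂ) * k2
  have hq2 : q.2 = a * y := rfl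
  have ha : a ≠ 0 := hne z hz
  constructor
  · show (y : ℂ) * wirt1 (f ∘ liftF ψ) (z, y) = _
    rw [hw1]
    show _ = q.2 * wirt1 f q + (y * (b / a)) * (q.2 * wirt2 f q)
    rw [hq2]
    field_simp
  · show (y : ℂ) * wirt2 (f ∘ liftF ψ) (z, y) = q.2 * wirt2 f q
    rw [hw2, hq2]
    ring
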